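/- Let p be a positive integer and q a nonzero integer. In the group G'_{p,q}, the identity element 1 lies in <<[x y, y x]>>^+, where x and y denote the images of the generators. -/

import Mathlib

/-- The set of conjugates `h⁻¹ * g * h` of an element `g` of a group. -/
def conjSet {G : Type*} [Group G] (g : G) : Set G := {x | ∃ h : G, x = h⁻¹ * g * h}

/-- `<<g>>^+`: the subsemigroup generated by all conjugates of `g`, i.e. the set of
nonempty finite products of conjugates of `g`. -/
def ggP {G : Type*} [Group G] (g : G) : Subsemigroup G := Subsemigroup.closure (conjSet g)

/-- The relators of the presentation
`< x, y | ((yx)^q (xy)^{-q})^p y = x⁻¹ ((yx)^q (xy)^{-q})^p,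
          ((yx)^{-q} (xy)^q)^p ((yx)^q (xy)^{-q})^p = 1 >`,
where `x` is the generator `0` and `y` is the generator `1`. -/
def gpqRels' (p q : ℤ) : Set (FreeGroup (Fin 2)) :=
  let x : FreeGroup (Fin 2) := FreeGroup.of 0
  let y : FreeGroup (Fin 2) := FreeGroup.of 1
  { ((y * x) ^ q * (x * y) ^ (-q)) ^ p * y *
      (x⁻¹ * ((y * x) ^ q * (x * y) ^ (-q)) ^ p)⁻¹,
    ((y * x) ^ (-q) * (x * y) ^ q) ^ p * ((y * x) ^ q * (x * y) ^ (-q)) ^ p }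

/-- `G'_{p,q}`, a presentation of the fundamental group of the 0-surgery along the
double twist knot `K_{p,q}`. -/
abbrev Gpq' (p q : ℤ) := PresentedGroup (gpqRels' p q)

namespace GgPAux
variable {G : Type*} [Group G]
theorem self_mem_ggP (g : G) : g ∈ ggP g := Subsemigroup.subset_closure ⟨1, by group⟩
theorem conj_mem_ggP {g s : G} (hs : s ∈ ggP g) (h : G) : h⁻¹ * s * h ∈ ggP g := by
  refine Subsemigroup.closure_induction (fun x hx => ?_) (fun x y hx hy px py => ?_) hs
  · obtain ⟨k, rfl⟩ := hx
    exact Subsemigroup.subset_closure ⟨k * h, by group⟩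
  · have e : h⁻¹ * (x * y) * h = (h⁻¹ * x * h) * (h⁻¹ * y * h) := by group
    rw [e]; exact mul_mem px py
theorem ggP_le_ggP {g t : G} (ht : t ∈ ggP g) : ggP t ≤ ggP g := by
  refine Subsemigroup.closure_le.2 ?_
  rintro x ⟨h, rfl⟩
  exact conj_mem_ggP ht h
theorem comm_pow_left (a b : G) :
    ∀ m : ℕ, (a ^ (m + 1))⁻¹ * b⁻¹ * a ^ (m + 1) * b ∈ ggP (a⁻¹ * b⁻¹ * a * b)
  | 0 => by simpa using self_mem_ggP (a⁻¹ * b⁻¹ * a * b)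
  | (m + 1) => by
    have IH := comm_pow_left a b m
    have key : (a ^ (m + 1 + 1))⁻¹ * b⁻¹ * a ^ (m + 1 + 1) * b
        = (a⁻¹ * ((a ^ (m + 1))⁻¹ * b⁻¹ * a ^ (m + 1) * b) * a) * (a⁻¹ * b⁻¹ * a * b) := by
      simp only [pow_succ]; group
    rw [key]
    exact mul_mem (conj_mem_ggP IH a) (self_mem_ggP _)
theorem comm_pow_right (a b : G) :
    ∀ n : ℕ, a⁻¹ * (b ^ (n + 1))⁻¹ * a * b ^ (n + 1) ∈ ggP (a⁻¹ * b⁻¹ * a * b)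
  | 0 => by simpa using self_mem_ggP (a⁻¹ * b⁻¹ * a * b)
  | (n + 1) => by
    have IH := comm_pow_right a b n
    have key : a⁻¹ * (b ^ (n + 1 + 1))⁻¹ * a * b ^ (n + 1 + 1)
        = (a⁻¹ * b⁻¹ * a * b) * (b⁻¹ * (a⁻¹ * (b ^ (n + 1))⁻¹ * a * b ^ (n + 1)) * b) := by
      simp only [pow_succ]; group
    rw [key]
    exact mul_mem (self_mem_ggP _) (conj_mem_ggP IH b)
theorem comm_pow_pow (a b : G) (m n : ℕ) :
    (a ^ (m + 1))⁻¹ * (b ^ (n + 1))⁻¹ * a ^ (m + 1) * b ^ (n + 1) ∈ ggP (a⁻¹ * b⁻¹ * a * b) :=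
  ggP_le_ggP (comm_pow_left a b m) (comm_pow_right (a ^ (m + 1)) b n)
theorem pow_pow_mem {g v u : G} (h : v * u ∈ ggP g) :
    ∀ n : ℕ, v ^ (n + 1) * u ^ (n + 1) ∈ ggP g
  | 0 => by simpa using h
  | (n + 1) => by
    have IH := pow_pow_mem h n
    have key : v ^ (n + 1 + 1) * u ^ (n + 1 + 1)
        = (((v ^ (n + 1))⁻¹)⁻¹ * (v * u) * (v ^ (n + 1))⁻¹) * (v ^ (n + 1) * u ^ (n + 1)) := by
      simp only [pow_succ]; group
    rw [key]
    exact mul_mem (conj_mem_ggP h (v ^ (n + 1))⁻¹) IH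
end GgPAux


open GgPAux in
theorem GgPAux.key_lemma {G : Type*} [Group G] (a b : G) (p q : ℤ) (hp : 0 < p) (hq : q ≠ 0)
    (h2 : (b ^ (-q) * a ^ q) ^ p * (b ^ q * a ^ (-q)) ^ p = 1) :
    (1 : G) ∈ ggP (a⁻¹ * b⁻¹ * a * b) := by
  have hvu : b ^ (-q) * a ^ q * (b ^ q * a ^ (-q)) ∈ ggP (a⁻¹ * b⁻¹ * a * b) := by
    rcases lt_or_gt_of_ne hq with hneg | hpos
    · obtain ⟨m, rfl⟩ : ∃ m : ℕ, q = -((m : ℤ) + 1) := ⟨(-q - 1).toNat, by omega⟩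
      have h1 : (b⁻¹)⁻¹ * a⁻¹ * b⁻¹ * a ∈ ggP (a⁻¹ * b⁻¹ * a * b) :=
        Subsemigroup.subset_closure ⟨a⁻¹ * b⁻¹ * a, by group⟩
      have h3 := ggP_le_ggP h1 (comm_pow_pow b⁻¹ a m m)
      have e : b ^ (-(-((m : ℤ) + 1))) * a ^ (-((m : ℤ) + 1)) *
            (b ^ (-((m : ℤ) + 1)) * a ^ (-(-((m : ℤ) + 1))))
          = (b⁻¹ ^ (m + 1))⁻¹ * (a ^ (m + 1))⁻¹ * b⁻¹ ^ (m + 1) * a ^ (m + 1) := by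
        group
      rw [e]; exact h3
    · obtain ⟨m, rfl⟩ : ∃ m : ℕ, q = (m : ℤ) + 1 := ⟨(q - 1).toNat, by omega⟩
      have h1 : b⁻¹ * (a⁻¹)⁻¹ * b * a⁻¹ ∈ ggP (a⁻¹ * b⁻¹ * a * b) :=
        Subsemigroup.subset_closure ⟨a⁻¹, by group⟩
      have h3 := ggP_le_ggP h1 (comm_pow_pow b a⁻¹ m m)
      have e : b ^ (-((m : ℤ) + 1)) * a ^ ((m : ℤ) + 1) *
            (b ^ ((m : ℤ) + 1) * a ^ (-((m : ℤ) + 1)))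
          = (b ^ (m + 1))⁻¹ * (a⁻¹ ^ (m + 1))⁻¹ * b ^ (m + 1) * a⁻¹ ^ (m + 1) := by
        group
      rw [e]; exact h3
  obtain ⟨k, rfl⟩ : ∃ k : ℕ, p = (k : ℤ) + 1 := ⟨(p - 1).toNat, by omega⟩
  have hm := pow_pow_mem hvu k
  have hc : ((k : ℤ) + 1) = ((k + 1 : ℕ) : ℤ) := by push_cast; ring
  rw [hc, zpow_natCast, zpow_natCast] at h2
  rw [← h2]
  exact hm


theorem one_mem_ggP_commutator (p q : ℤ) (hp : 0 < p) (hq : q ≠ 0) :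
    letI x : Gpq' p q := PresentedGroup.of 0
    letI y : Gpq' p q := PresentedGroup.of 1
    (1 : Gpq' p q) ∈ ggP ((x * y)⁻¹ * (y * x)⁻¹ * (x * y) * (y * x)) := by
  set x : Gpq' p q := PresentedGroup.of 0 with hx
  set y : Gpq' p q := PresentedGroup.of 1 with hy
  show (1 : Gpq' p q) ∈ ggP ((x * y)⁻¹ * (y * x)⁻¹ * (x * y) * (y * x))
  have hrel : (((FreeGroup.of 1 : FreeGroup (Fin 2)) * FreeGroup.of 0) ^ (-q) *
        (FreeGroup.of 0 * FreeGroup.of 1) ^ q) ^ p *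
      ((FreeGroup.of 1 * FreeGroup.of 0) ^ q * (FreeGroup.of 0 * FreeGroup.of 1) ^ (-q)) ^ p
      ∈ gpqRels' p q := by
    right; rfl
  have h2 : ((y * x) ^ (-q) * (x * y) ^ q) ^ p * ((y * x) ^ q * (x * y) ^ (-q)) ^ p = 1 := by
    have h : PresentedGroup.mk (gpqRels' p q)
        ((((FreeGroup.of 1 : FreeGroup (Fin 2)) * FreeGroup.of 0) ^ (-q) *
          (FreeGroup.of 0 * FreeGroup.of 1) ^ q) ^ p *
        ((FreeGroup.of 1 * FreeGroup.of 0) ^ q * (FreeGroup.of 0 * FreeGroup.of 1) ^ (-q)) ^ p)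
        = 1 := (QuotientGroup.eq_one_iff _).2 (Subgroup.subset_normalClosure hrel)
    simp only [map_mul, map_zpow] at h
    exact h
  exact GgPAux.key_lemma (x * y) (y * x) p q hp hq h2
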